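/- arXiv:0908.1752 — 2 statements merged into one kernel-verified Lean document; each statement's English description precedes it below -/
import Mathlib

section
/- Let p be an odd prime and n ≥ 1. If H is a closed subgroup of SL_n(ℤ_p) (the special linear group over the ring of p-adic integers, with its natural topology as a subspace of n×n matrices over ℤ_p) whose image under the reduction homomorphism SL_n(ℤ_p) → SL_n(ℤ/p²ℤ) is all of SL_n(ℤ/p²ℤ), then H = SL_n(ℤ_p). -/
open Matrix Polynomial Finset

namespace SLPadicAux

variable {p : ℕ} [hp : Fact p.Prime] {n : ℕ}

/-- Entrywise congruence mod `p^k` for matrices over `ℤ_[p]`. -/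
def Cong (k : ℕ) (X Y : Matrix (Fin n) (Fin n) ℤ_[p]) : Prop :=
  ∃ B, X - Y = (p : ℤ_[p]) ^ k • B

lemma cong_iff_dvd {k : ℕ} {X Y : Matrix (Fin n) (Fin n) ℤ_[p]} :
    Cong k X Y ↔ ∀ i j, (p : ℤ_[p]) ^ k ∣ X i j - Y i j := by
  constructor
  · rintro ⟨B, hB⟩ i j
    exact ⟨B i j, by rw [← Matrix.sub_apply, hB, Matrix.smul_apply, smul_eq_mul]⟩
  · intro h
    refine ⟨fun i j => (h i j).choose, ?_⟩
    ext i j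
    show X i j - Y i j = (p : ℤ_[p]) ^ k * (h i j).choose
    exact (h i j).choose_spec

lemma cong_refl {k : ℕ} (X : Matrix (Fin n) (Fin n) ℤ_[p]) : Cong k X X :=
  ⟨0, by simp⟩

lemma Cong.symm {k : ℕ} {X Y : Matrix (Fin n) (Fin n) ℤ_[p]} (h : Cong k X Y) : Cong k Y X := by
  obtain ⟨B, hB⟩ := h
  exact ⟨-B, by rw [← neg_sub, hB, smul_neg]⟩

lemma Cong.trans {k : ℕ} {X Y Z : Matrix (Fin n) (Fin n) ℤ_[p]}
    (h1 : Cong k X Y) (h2 : Cong k Y Z) : Cong k X Z := by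
  obtain ⟨B, hB⟩ := h1
  obtain ⟨C, hC⟩ := h2
  exact ⟨B + C, by rw [show X - Z = (X - Y) + (Y - Z) by abel, hB, hC, smul_add]⟩

lemma Cong.mono {k l : ℕ} (hlk : l ≤ k) {X Y : Matrix (Fin n) (Fin n) ℤ_[p]}
    (h : Cong k X Y) : Cong l X Y := by
  obtain ⟨B, hB⟩ := h
  refine ⟨(p : ℤ_[p]) ^ (k - l) • B, ?_⟩
  rw [hB, smul_smul, ← pow_add]
  congr 2
  omega

lemma Cong.mul {k : ℕ} {X X' Y Y' : Matrix (Fin n) (Fin n) ℤ_[p]}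
    (h1 : Cong k X X') (h2 : Cong k Y Y') : Cong k (X * Y) (X' * Y') := by
  obtain ⟨B, hB⟩ := h1
  obtain ⟨C, hC⟩ := h2
  refine ⟨B * Y + X' * C, ?_⟩
  have : X * Y - X' * Y' = (X - X') * Y + X' * (Y - Y') := by noncomm_ring
  rw [this, hB, hC, smul_mul_assoc, mul_smul_comm, smul_add]

lemma dvd_iff_toZModPow {k : ℕ} (z : ℤ_[p]) :
    (p : ℤ_[p]) ^ k ∣ z ↔ PadicInt.toZModPow k z = 0 := by
  rw [← Ideal.mem_span_singleton, ← PadicInt.ker_toZModPow, RingHom.mem_ker]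

lemma cong_iff_map_eq {k : ℕ} {X Y : Matrix (Fin n) (Fin n) ℤ_[p]} :
    Cong k X Y ↔
      (PadicInt.toZModPow k).mapMatrix X = (PadicInt.toZModPow k).mapMatrix Y := by
  rw [cong_iff_dvd]
  constructor
  · intro h
    ext i j
    have := (dvd_iff_toZModPow _).mp (h i j)
    rw [map_sub, sub_eq_zero] at this
    simpa using this
  · intro h i j
    rw [dvd_iff_toZModPow, map_sub, sub_eq_zero]
    have : (PadicInt.toZModPow k).mapMatrix X i j
        = (PadicInt.toZModPow k).mapMatrix Y i j := by rw [h]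
    simpa using this

lemma dvd_det_sub {k : ℕ} {X Y : Matrix (Fin n) (Fin n) ℤ_[p]} (h : Cong k X Y) :
    (p : ℤ_[p]) ^ k ∣ X.det - Y.det := by
  rw [dvd_iff_toZModPow, map_sub, sub_eq_zero, (PadicInt.toZModPow k).map_det,
    (PadicInt.toZModPow k).map_det, cong_iff_map_eq.mp h]

lemma choose_dvd_aux (hodd : Odd p) {j : ℕ} (hj : 1 ≤ j) {m : ℕ} (h2 : 2 ≤ m) (hmp : m ≤ p) :
    (p : ℤ_[p]) ^ (2 * j + 1) ∣ (p : ℤ_[p]) ^ (j * m) * (p.choose m : ℤ_[p]) := by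
  have hp3 : 3 ≤ p := by
    rcases hp.out.two_le.lt_or_eq with h | h
    · omega
    · exact absurd hodd (by simp [← h, Nat.not_odd_iff_even.mpr ⟨1, rfl⟩])
  rcases eq_or_lt_of_le hmp with h | h
  · subst h
    refine Dvd.dvd.mul_right (pow_dvd_pow _ ?_) _
    nlinarith
  · have hchoose : (p : ℤ_[p]) ∣ (p.choose m : ℤ_[p]) := by
      exact_mod_cast Nat.cast_dvd_cast (α := ℤ_[p]) (hp.out.dvd_choose_self (by omega) h)
    calc (p : ℤ_[p]) ^ (2 * j + 1) = (p : ℤ_[p]) ^ (2 * j) * p := by rw [pow_succ]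
    _ ∣ (p : ℤ_[p]) ^ (j * m) * (p.choose m : ℤ_[p]) :=
      mul_dvd_mul (pow_dvd_pow _ (by nlinarith)) hchoose

lemma poly_dvd (hodd : Odd p) {j : ℕ} (hj : 1 ≤ j) :
    (C ((p : ℤ_[p]) ^ (2 * j + 1))) ∣
      ((1 + C ((p : ℤ_[p]) ^ j) * X) ^ p - (1 + C ((p : ℤ_[p]) ^ (j + 1)) * X)) := by
  have hpos : 0 < p := hp.out.pos
  set x : ℤ_[p][X] := C ((p : ℤ_[p]) ^ j) * X with hxdef
  have h1 : (1 + x) ^ p = ∑ m ∈ range (p + 1), x ^ m * (p.choose m : ℤ_[p][X]) := by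
    rw [add_comm, add_pow]
    simp only [one_pow, mul_one]
  have h2 : ∑ m ∈ range p, x ^ (m + 1) * (p.choose (m + 1) : ℤ_[p][X])
      = ∑ m ∈ range (p - 1), x ^ (m + 2) * (p.choose (m + 2) : ℤ_[p][X])
        + x * (p.choose 1 : ℤ_[p][X]) := by
    have hrw : range p = range ((p - 1) + 1) := by congr 1; omega
    rw [hrw, Finset.sum_range_succ']
    norm_num
  have hxp : x * (p : ℤ_[p][X]) = C ((p : ℤ_[p]) ^ (j + 1)) * X := by
    rw [← C_eq_natCast, hxdef, pow_succ, C_mul]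
    ring
  have hkey : (1 + x) ^ p - (1 + C ((p : ℤ_[p]) ^ (j + 1)) * X)
      = ∑ m ∈ range (p - 1), x ^ (m + 2) * (p.choose (m + 2) : ℤ_[p][X]) := by
    rw [h1, Finset.sum_range_succ', h2]
    simp only [pow_zero, one_mul, Nat.choose_zero_right, Nat.cast_one, Nat.choose_one_right]
    rw [hxp]
    ring
  rw [hkey]
  refine Finset.dvd_sum fun m hm => ?_
  have hm' : m < p - 1 := Finset.mem_range.mp hm
  obtain ⟨c, hc⟩ := choose_dvd_aux hodd hj (m := m + 2) (by omega) (by omega)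
  refine ⟨X ^ (m + 2) * C c, ?_⟩
  calc x ^ (m + 2) * (p.choose (m + 2) : ℤ_[p][X])
      = C ((p : ℤ_[p]) ^ (j * (m + 2)) * (p.choose (m + 2) : ℤ_[p])) * X ^ (m + 2) := by
        rw [← C_eq_natCast, hxdef, mul_pow, ← C_pow, ← pow_mul, C_mul]
        ring
    _ = C ((p : ℤ_[p]) ^ (2 * j + 1) * c) * X ^ (m + 2) := by rw [← hc]
    _ = C ((p : ℤ_[p]) ^ (2 * j + 1)) * (X ^ (m + 2) * C c) := by rw [C_mul]; ring

lemma key_pow (hodd : Odd p) {j : ℕ} (hj : 1 ≤ j) (A : Matrix (Fin n) (Fin n) ℤ_[p]) :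
    Cong (2 * j + 1) ((1 + (p : ℤ_[p]) ^ j • A) ^ p) (1 + (p : ℤ_[p]) ^ (j + 1) • A) := by
  obtain ⟨q, hq⟩ := poly_dvd (p := p) hodd hj
  refine ⟨Polynomial.aeval A q, ?_⟩
  have h := congrArg (Polynomial.aeval A) hq
  simp only [_root_.map_sub, _root_.map_add, _root_.map_mul, _root_.map_pow, _root_.map_one,
    Polynomial.aeval_X, Polynomial.aeval_C, Algebra.algebraMap_eq_smul_one, _root_.smul_pow, one_pow, smul_mul_assoc,
    one_mul] at h
  exact h


lemma cong_step {k : ℕ} (hk : 2 ≤ k) {X Y A B : Matrix (Fin n) (Fin n) ℤ_[p]}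
    (hX : X = 1 + (p : ℤ_[p]) ^ (k - 1) • A) (hY : Y = 1 + (p : ℤ_[p]) ^ (k - 1) • B)
    (hXY : Cong k X Y) :
    Cong (k + 1) ((1 : Matrix (Fin n) (Fin n) ℤ_[p]) + (p : ℤ_[p]) ^ k • A)
      (1 + (p : ℤ_[p]) ^ k • B) := by
  have hpne : (p : ℤ_[p]) ≠ 0 := Nat.cast_ne_zero.mpr hp.out.ne_zero
  rw [cong_iff_dvd]
  intro i j
  have h1 : (p : ℤ_[p]) ^ (k - 1) * (A i j - B i j) = X i j - Y i j := by
    rw [hX, hY]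
    simp only [Matrix.add_apply, Matrix.smul_apply, smul_eq_mul]
    ring
  have h2 : (p : ℤ_[p]) ^ k ∣ X i j - Y i j := cong_iff_dvd.mp hXY i j
  rw [← h1] at h2
  obtain ⟨t, ht⟩ := h2
  have hk1 : (p : ℤ_[p]) ^ k = (p : ℤ_[p]) ^ (k - 1) * p := by
    rw [← pow_succ]; congr 1; omega
  rw [hk1, mul_assoc] at ht
  have h3 : A i j - B i j = (p : ℤ_[p]) * t :=
    mul_left_cancel₀ (pow_ne_zero _ hpne) ht
  have h4 : ((1 : Matrix (Fin n) (Fin n) ℤ_[p]) + (p : ℤ_[p]) ^ k • A) i j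
      - ((1 : Matrix (Fin n) (Fin n) ℤ_[p]) + (p : ℤ_[p]) ^ k • B) i j
      = (p : ℤ_[p]) ^ k * (A i j - B i j) := by
    simp only [Matrix.add_apply, Matrix.smul_apply, smul_eq_mul]
    ring
  rw [h4, h3, pow_succ]
  exact ⟨t, by ring⟩

lemma approx (hodd : Odd p) (hn : 1 ≤ n)
    (H : Subgroup (Matrix.SpecialLinearGroup (Fin n) ℤ_[p]))
    (hsurj : Subgroup.map
      (Matrix.SpecialLinearGroup.map (PadicInt.toZModPow (p := p) 2)) H = ⊤) :
    ∀ k, 2 ≤ k → ∀ g : Matrix.SpecialLinearGroup (Fin n) ℤ_[p],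
      ∃ h ∈ H, Cong k h.val g.val := by
  haveI : NeZero n := ⟨by omega⟩
  have hpne : (p : ℤ_[p]) ≠ 0 := Nat.cast_ne_zero.mpr hp.out.ne_zero
  intro k hk
  induction k, hk using Nat.le_induction with
  | base =>
    intro g
    have hmem : Matrix.SpecialLinearGroup.map (PadicInt.toZModPow (p := p) 2) g ∈
        Subgroup.map (Matrix.SpecialLinearGroup.map (PadicInt.toZModPow (p := p) 2)) H := by
      rw [hsurj]; trivial
    obtain ⟨h, hH, hh⟩ := hmem
    refine ⟨h, hH, cong_iff_map_eq.mpr ?_⟩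
    have := congrArg Subtype.val hh
    simpa [RingHom.mapMatrix_apply] using this
  | succ k hk IH =>
    intro g
    obtain ⟨h, hH, hcong⟩ := IH g
    set u : Matrix.SpecialLinearGroup (Fin n) ℤ_[p] := h⁻¹ * g with hu
    have hu1 : Cong k u.val 1 := by
      have hmul := Cong.mul (cong_refl ((h⁻¹ :
        Matrix.SpecialLinearGroup (Fin n) ℤ_[p]).val)) hcong.symm
      have e1 : (h⁻¹ : Matrix.SpecialLinearGroup (Fin n) ℤ_[p]).val * g.val = u.val := by
        rw [hu, ← Matrix.SpecialLinearGroup.coe_mul]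
      have e2 : (h⁻¹ : Matrix.SpecialLinearGroup (Fin n) ℤ_[p]).val * h.val = 1 := by
        rw [← Matrix.SpecialLinearGroup.coe_mul, inv_mul_cancel,
          Matrix.SpecialLinearGroup.coe_one]
      rwa [e1, e2] at hmul
    obtain ⟨A, hA⟩ := hu1
    have hu' : u.val = 1 + (p : ℤ_[p]) ^ k • A := by rw [← hA]; abel
    -- trace information
    have hdetu : ((1 : Matrix (Fin n) (Fin n) ℤ_[p]) + (p : ℤ_[p]) ^ k • A).det = 1 := by
      rw [← hu']; exact u.prop
    rw [Matrix.det_one_add_smul] at hdetu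
    set e₀ := (Matrix.det (1 + (Polynomial.X : (ℤ_[p])[X]) •
      A.map Polynomial.C)).divX.divX.eval ((p : ℤ_[p]) ^ k) with he₀
    have htr : Matrix.trace A = -(e₀ * (p : ℤ_[p]) ^ k) := by
      apply mul_right_cancel₀ (pow_ne_zero k hpne)
      linear_combination hdetu
    set M : Matrix (Fin n) (Fin n) ℤ_[p] := 1 + (p : ℤ_[p]) ^ (k - 1) • A with hM
    set e₁ := (Matrix.det (1 + (Polynomial.X : (ℤ_[p])[X]) •
      A.map Polynomial.C)).divX.divX.eval ((p : ℤ_[p]) ^ (k - 1)) with he₁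
    set d : ℤ_[p] := -(e₀ * (p : ℤ_[p]) ^ (k - 1)) + e₁ * (p : ℤ_[p]) ^ (k - 2) with hd
    have hMdet : M.det = 1 + (p : ℤ_[p]) ^ k * d := by
      rw [hM, Matrix.det_one_add_smul, htr, hd, ← he₁]
      have h2 : ((p : ℤ_[p]) ^ (k - 1)) ^ 2 = (p : ℤ_[p]) ^ k * (p : ℤ_[p]) ^ (k - 2) := by
        rw [← pow_mul, ← pow_add]; congr 1; omega
      rw [h2]; ring
    set sing : Fin n → ℤ_[p] := Pi.single (0 : Fin n) (1 : ℤ_[p]) with hsing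
    set N := M.updateRow 0 sing with hN
    have hcongN : Cong 1 N 1 := by
      rw [cong_iff_dvd]
      intro i j
      by_cases hi : i = 0
      · subst hi
        have : N 0 j = (1 : Matrix (Fin n) (Fin n) ℤ_[p]) 0 j := by
          rw [hN, Matrix.updateRow_self]
          simp [hsing, Matrix.one_apply, Pi.single_apply, eq_comm]
        rw [this, sub_self]
        exact dvd_zero _
      · rw [hN, Matrix.updateRow_ne hi]
        have : M i j - (1 : Matrix (Fin n) (Fin n) ℤ_[p]) i j = (p : ℤ_[p]) ^ (k - 1) * A i j := by
          rw [hM]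
          simp only [Matrix.add_apply, Matrix.smul_apply, smul_eq_mul]
          ring
        rw [this, pow_one]
        exact Dvd.dvd.mul_right (dvd_pow_self _ (by omega)) _
    have hcofdvd : (p : ℤ_[p]) ∣ N.det - 1 := by
      have := dvd_det_sub hcongN
      simpa using this
    have hcof : IsUnit N.det := by
      by_contra hnot
      have h1 : (p : ℤ_[p]) ∣ N.det :=
        (PadicInt.norm_lt_one_iff_dvd _).mp (PadicInt.not_isUnit_iff.mp hnot)
      have h2 : (p : ℤ_[p]) ∣ 1 := by
        have := dvd_sub h1 hcofdvd
        simpa using this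
      have h3 : IsUnit (p : ℤ_[p]) := isUnit_of_dvd_one h2
      rw [PadicInt.isUnit_iff, PadicInt.norm_p, inv_eq_one] at h3
      have : (p : ℕ) = 1 := by exact_mod_cast h3
      have := hp.out.two_le
      omega
    obtain ⟨v, hv⟩ := hcof.exists_right_inv
    set c : ℤ_[p] := -((p : ℤ_[p]) ^ k * (d * v)) with hc
    set W := M.updateRow 0 (M 0 + c • sing) with hW
    have hWdet : W.det = 1 := by
      rw [hW, Matrix.det_updateRow_add, Matrix.det_updateRow_smul, Matrix.updateRow_eq_self,
        ← hN, hMdet, hc]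
      linear_combination (-((p : ℤ_[p]) ^ k * d)) * hv
    set w : Matrix.SpecialLinearGroup (Fin n) ℤ_[p] := ⟨W, hWdet⟩ with hw
    have hWM : Cong k W M := by
      rw [cong_iff_dvd]
      intro i j
      by_cases hi : i = 0
      · subst hi
        have : W 0 j - M 0 j = c * sing j := by
          rw [hW, Matrix.updateRow_self]
          simp only [Pi.add_apply, Pi.smul_apply, smul_eq_mul]
          ring
        rw [this, hc]
        exact Dvd.dvd.mul_right ⟨-(d * v), by ring⟩ _
      · rw [hW, Matrix.updateRow_ne hi, sub_self]
        exact dvd_zero _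
    have hM1 : Cong (k - 1) M 1 := ⟨A, by rw [hM]; abel⟩
    have hw1 : Cong (k - 1) W 1 := (hWM.mono (by omega)).trans hM1
    obtain ⟨A', hA'⟩ := id hw1
    have hW' : W = 1 + (p : ℤ_[p]) ^ (k - 1) • A' := by rw [← hA']; abel
    have hAA' : Cong (k + 1) ((1 : Matrix (Fin n) (Fin n) ℤ_[p]) + (p : ℤ_[p]) ^ k • A')
        (1 + (p : ℤ_[p]) ^ k • A) := cong_step hk hW' hM hWM
    have hkey : ∀ B : Matrix (Fin n) (Fin n) ℤ_[p],
        Cong (k + 1) ((1 + (p : ℤ_[p]) ^ (k - 1) • B) ^ p) (1 + (p : ℤ_[p]) ^ k • B) := by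
      intro B
      have hkp := key_pow (n := n) hodd (j := k - 1) (by omega) B
      have hk1 : k - 1 + 1 = k := by omega
      rw [hk1] at hkp
      exact hkp.mono (by omega)
    have hwu : Cong (k + 1) (W ^ p) u.val := by
      have h1 : Cong (k + 1) (W ^ p) (1 + (p : ℤ_[p]) ^ k • A') := by
        rw [hW']; exact hkey A'
      refine (h1.trans hAA').trans ?_
      rw [hu']
      exact cong_refl _
    obtain ⟨h₁, h₁H, hcong₁⟩ := IH w
    have hh₁W : Cong k h₁.val W := hcong₁
    have hh₁1 : Cong (k - 1) h₁.val 1 := (hh₁W.mono (by omega)).trans hw1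
    obtain ⟨B₁, hB₁⟩ := hh₁1
    have hB₁' : h₁.val = 1 + (p : ℤ_[p]) ^ (k - 1) • B₁ := by rw [← hB₁]; abel
    have hBA' : Cong (k + 1) ((1 : Matrix (Fin n) (Fin n) ℤ_[p]) + (p : ℤ_[p]) ^ k • B₁)
        (1 + (p : ℤ_[p]) ^ k • A') := cong_step hk hB₁' hW' hh₁W
    have hpow : Cong (k + 1) (h₁.val ^ p) (W ^ p) := by
      have h1 : Cong (k + 1) (h₁.val ^ p) (1 + (p : ℤ_[p]) ^ k • B₁) := by
        rw [hB₁']; exact hkey B₁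
      have h2 : Cong (k + 1) (1 + (p : ℤ_[p]) ^ k • A') (W ^ p) := by
        have := hkey A'
        rw [← hW'] at this
        exact this.symm
      exact (h1.trans hBA').trans h2
    refine ⟨h * h₁ ^ p, H.mul_mem hH (H.pow_mem h₁H p), ?_⟩
    have hfinal : Cong (k + 1) (h.val * h₁.val ^ p) (h.val * u.val) :=
      Cong.mul (cong_refl _) (hpow.trans hwu)
    have e3 : (h * h₁ ^ p).val = h.val * h₁.val ^ p := by
      rw [Matrix.SpecialLinearGroup.coe_mul, Matrix.SpecialLinearGroup.coe_pow]
    have e4 : h.val * u.val = g.val := by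
      rw [← Matrix.SpecialLinearGroup.coe_mul, hu, mul_inv_cancel_left]
    rw [e3, ← e4]
    exact hfinal

end SLPadicAux

/-- The topology on the special linear group induced (as a subspace) from the
space of `n × n` matrices (with the product topology). -/
instance SLTopology {n : Type*} [Fintype n] [DecidableEq n] {R : Type*} [CommRing R]
    [TopologicalSpace R] : TopologicalSpace (Matrix.SpecialLinearGroup n R) :=
  inferInstanceAs (TopologicalSpace { A : Matrix n n R // A.det = 1 })

/-- If `p` is an odd prime and `H` is a closed subgroup of `SL_n(ℤ_p)` whose image in
`SL_n(ℤ/p²ℤ)` under entrywise reduction is everything, then `H = SL_n(ℤ_p)`. -/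
theorem closed_subgroup_SL_padicInt_eq_top_of_map_eq_top
    (p n : ℕ) [Fact p.Prime] (hodd : Odd p) (hn : 1 ≤ n)
    (H : Subgroup (Matrix.SpecialLinearGroup (Fin n) ℤ_[p]))
    (hclosed : IsClosed (H : Set (Matrix.SpecialLinearGroup (Fin n) ℤ_[p])))
    (hsurj : Subgroup.map
      (Matrix.SpecialLinearGroup.map (PadicInt.toZModPow (p := p) 2)) H = ⊤) :
    H = ⊤ := by
  rw [Subgroup.eq_top_iff']
  intro g
  have happrox := SLPadicAux.approx hodd hn H hsurj
  choose hfun hmem hcong using fun k => happrox (k + 2) (by omega) g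
  suffices hcl : g ∈ closure (H : Set (Matrix.SpecialLinearGroup (Fin n) ℤ_[p])) by
    rwa [hclosed.closure_eq] at hcl
  have hcoe : Filter.Tendsto (fun k => ((hfun k : Matrix.SpecialLinearGroup (Fin n) ℤ_[p]) :
      Matrix (Fin n) (Fin n) ℤ_[p])) Filter.atTop (nhds (g : Matrix (Fin n) (Fin n) ℤ_[p])) := by
    rw [show (fun k => ((hfun k : Matrix.SpecialLinearGroup (Fin n) ℤ_[p]) :
        Matrix (Fin n) (Fin n) ℤ_[p])) = fun k => ((hfun k).val : Fin n → Fin n → ℤ_[p]) from rfl]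
    apply tendsto_pi_nhds.mpr
    intro i
    rw [tendsto_pi_nhds]
    intro j
    rw [tendsto_iff_dist_tendsto_zero]
    have hbound : ∀ k : ℕ, dist ((hfun k).val i j) (g.val i j) ≤ ((p : ℝ)⁻¹) ^ (k + 2) := by
      intro k
      have hdvd : (p : ℤ_[p]) ^ (k + 2) ∣ (hfun k).val i j - g.val i j :=
        SLPadicAux.cong_iff_dvd.mp (hcong k) i j
      have hmem' : (hfun k).val i j - g.val i j ∈
          (Ideal.span {(p : ℤ_[p]) ^ (k + 2)} : Ideal ℤ_[p]) :=
        Ideal.mem_span_singleton.mpr hdvd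
      have := (PadicInt.norm_le_pow_iff_mem_span_pow _ (k + 2)).mpr hmem'
      rw [dist_eq_norm]
      calc ‖(hfun k).val i j - g.val i j‖ ≤ (p : ℝ) ^ (-(k + 2) : ℤ) := this
        _ = ((p : ℝ)⁻¹) ^ (k + 2) := by
          rw [show (-(k + 2) : ℤ) = -((k+2 : ℕ) : ℤ) by push_cast; ring, _root_.zpow_neg,
            inv_pow, zpow_natCast]
    have h0 : ∀ k : ℕ, (0 : ℝ) ≤ dist ((hfun k).val i j) (g.val i j) := fun k => dist_nonneg
    refine squeeze_zero h0 hbound ?_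
    have hplt : (p : ℝ)⁻¹ < 1 := by
      rw [inv_lt_one_iff₀]
      right
      exact_mod_cast (Fact.out : p.Prime).one_lt
    have hpnn : (0 : ℝ) ≤ (p : ℝ)⁻¹ := by positivity
    have := (tendsto_pow_atTop_nhds_zero_of_lt_one hpnn hplt).comp
      (Filter.tendsto_add_atTop_nat 2)
    exact this
  exact mem_closure_of_tendsto
    (tendsto_subtype_rng.mpr hcoe) (Filter.Eventually.of_forall hmem)
end

section
/- Let p ≥ 5 be a prime, let k be a finite field of characteristic p, and let W(k) be the ring of Witt vectors of k. The reduction group homomorphism SL₂(W(k)/p²W(k)) → SL₂(W(k)/pW(k)), induced entrywise by the natural surjective ring homomorphism W(k)/p²W(k) → W(k)/pW(k), is surjective and does not split: there is no group homomorphism s : SL₂(W(k)/pW(k)) → SL₂(W(k)/p²W(k)) whose composite with the reduction map is the identity of SL₂(W(k)/pW(k)). -/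
section MatrixLemmas
variable {R : Type*} [CommRing R]

local notation "M2R" => Matrix (Fin 2) (Fin 2) R

private lemma mul_natCast' (X : M2R) (n : ℕ) : X * (n : M2R) = (n : R) • X := by
  rw [← nsmul_eq_mul', Nat.cast_smul_eq_nsmul]

private lemma unip_pow (e : M2R) (he : e * e = 0) : ∀ n : ℕ, (1 + e) ^ n = 1 + n • e := by
  intro n
  induction n with
  | zero => simp
  | succ n ih =>
    rw [pow_succ, ih]
    rw [mul_add, mul_one, add_mul, one_mul, smul_mul_assoc, he, smul_zero, add_zero, succ_nsmul]
    abel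

private lemma NN_eq' (a b c d : R) (hdet : a * d - b * c = 1) :
    (!![a,b;c,d] - 1) * (!![a,b;c,d] - 1) = (Matrix.trace !![a,b;c,d] - 2) • !![a,b;c,d] := by
  ext i j
  fin_cases i <;> fin_cases j <;>
    simp [Matrix.mul_apply, Fin.sum_univ_two, Matrix.trace_fin_two, Matrix.one_apply] <;>
    first
    | ring1
    | linear_combination hdet
    | linear_combination -hdet

private lemma NN_eq (A : M2R) (hdet : A.det = 1) :
    (A - 1) * (A - 1) = (A.trace - 2) • A := by
  rw [Matrix.det_fin_two] at hdet
  rw [Matrix.eta_fin_two A]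
  exact NN_eq' _ _ _ _ hdet

private lemma pow_p_eq (A : M2R) (hdet : A.det = 1) (p : ℕ) (hp : p.Prime) (hp5 : 5 ≤ p)
    (hδp : (p : R) * (A.trace - 2) = 0)
    (hδ2 : (A.trace - 2) * (A.trace - 2) = 0) :
    A ^ p = 1 + p • (A - 1) := by
  set N := A - 1 with hN
  set δ := A.trace - 2 with hδ
  have hN2 : N * N = δ • A := NN_eq A hdet
  have hAN : A * N = N * N + N := by
    rw [show A = N + 1 by rw [hN]; abel, add_mul, one_mul]
  have hN3 : N * N * N = δ • N := by
    rw [hN2, Matrix.smul_mul, hAN, hN2, smul_add, smul_smul, hδ2, zero_smul, zero_add]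
  have hN4 : N * N * N * N = 0 := by
    rw [hN3, Matrix.smul_mul, hN2, smul_smul, hδ2, zero_smul]
  have hpow : ∀ m : ℕ, N ^ (4 + m) = 0 := by
    intro m
    rw [show (4 + m) = m + 4 by omega, pow_add,
      show N ^ 4 = N * N * N * N by rw [pow_succ, pow_succ, pow_succ, pow_one], hN4, mul_zero]
  have key : ∀ m : ℕ, 2 ≤ m → m ≤ p → N ^ m * (p.choose m : M2R) = 0 := by
    intro m h2 hmp
    rcases le_or_gt 4 m with h4 | h4
    · obtain ⟨j, rfl⟩ : ∃ j, m = 4 + j := ⟨m - 4, by omega⟩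
      rw [hpow, zero_mul]
    · have hkill : ∀ X : M2R, (p.choose m : R) • (δ • X) = 0 := by
        intro X
        obtain ⟨c, hc⟩ := hp.dvd_choose_self (show m ≠ 0 by omega) (show m < p by omega)
        rw [smul_smul, hc, Nat.cast_mul,
          show ((p : R) * c) * δ = (c : R) * ((p : R) * δ) by ring, hδp, mul_zero, zero_smul]
      interval_cases m
      · rw [mul_natCast', show N ^ 2 = N * N from sq N, hN2, hkill]
      · rw [mul_natCast', show N ^ 3 = N * N * N by rw [pow_succ, pow_succ, pow_one], hN3, hkill]
  rw [show A = N + 1 by rw [hN]; abel, (Commute.one_right N).add_pow]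
  obtain ⟨q, rfl⟩ : ∃ q, p = q + 2 := ⟨p - 2, by omega⟩
  rw [Finset.sum_range_succ', Finset.sum_range_succ']
  have hz : ∀ i ∈ Finset.range (q + 1),
      N ^ (i + 1 + 1) * 1 ^ (q + 2 - (i + 1 + 1)) * ((q + 2).choose (i + 1 + 1) : M2R) = 0 := by
    intro i hi
    have hi' := Finset.mem_range.mp hi
    rw [one_pow, mul_one, key (i + 1 + 1) (by omega) (by omega)]
  rw [Finset.sum_congr rfl hz, Finset.sum_const, smul_zero]
  simp only [zero_add, pow_zero, pow_one, one_pow, mul_one, one_mul, Nat.choose_zero_right,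
    Nat.choose_one_right, Nat.cast_one]
  rw [mul_natCast', Nat.cast_smul_eq_nsmul]
  abel

end MatrixLemmas

section WittLemmas
variable (p : ℕ) [Fact p.Prime] (k : Type*) [Field k] [Finite k] [CharP k p]

local notation "W" => WittVector p k

noncomputable abbrev wittPi : (W ⧸ Ideal.span {(p : W) ^ 2}) →+* (W ⧸ Ideal.span {(p : W)}) :=
  Ideal.Quotient.factor (S := Ideal.span {(p : W) ^ 2}) (T := Ideal.span {(p : W)})
    (Ideal.span_singleton_le_span_singleton.mpr (dvd_pow_self _ two_ne_zero))

omit [Finite k] [CharP k p] in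
lemma wittPi_surj : Function.Surjective (wittPi p k) := by
  intro x
  obtain ⟨w, rfl⟩ := Ideal.Quotient.mk_surjective x
  exact ⟨Ideal.Quotient.mk _ w, Ideal.Quotient.factor_mk _ w⟩

omit [Finite k] [CharP k p] in
lemma witt_ker_mul (x y : W ⧸ Ideal.span {(p : W) ^ 2})
    (hx : wittPi p k x = 0) (hy : wittPi p k y = 0) : x * y = 0 := by
  obtain ⟨a, rfl⟩ := Ideal.Quotient.mk_surjective x
  obtain ⟨b, rfl⟩ := Ideal.Quotient.mk_surjective y
  rw [Ideal.Quotient.factor_mk, Ideal.Quotient.eq_zero_iff_mem, Ideal.mem_span_singleton] at hx hy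
  obtain ⟨u, rfl⟩ := hx
  obtain ⟨v, rfl⟩ := hy
  rw [← map_mul, Ideal.Quotient.eq_zero_iff_mem, Ideal.mem_span_singleton]
  exact ⟨u * v, by ring⟩

omit [Finite k] [CharP k p] in
lemma wittPi_p : wittPi p k (p : W ⧸ Ideal.span {(p : W) ^ 2}) = 0 := by
  have h : ((p : W ⧸ Ideal.span {(p : W) ^ 2})) = Ideal.Quotient.mk _ (p : W) := by push_cast; rfl
  rw [h, Ideal.Quotient.factor_mk, Ideal.Quotient.eq_zero_iff_mem]
  exact Ideal.mem_span_singleton_self _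

lemma witt_p_ne_zero : (p : W ⧸ Ideal.span {(p : W) ^ 2}) ≠ 0 := by
  have : PerfectRing k p := PerfectRing.ofFiniteOfIsReduced p k
  intro h
  rw [show ((p : W ⧸ Ideal.span {(p : W) ^ 2})) = Ideal.Quotient.mk _ (p : W) by push_cast; rfl,
    Ideal.Quotient.eq_zero_iff_mem, Ideal.mem_span_singleton] at h
  obtain ⟨c, hc⟩ := h
  have hp0 : (p : W) ≠ 0 := (WittVector.irreducible p).ne_zero
  have hmul : (p : W) * ((p : W) * c - 1) = 0 := by linear_combination -hc
  rcases mul_eq_zero.mp hmul with h' | h'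
  · exact hp0 h'
  · exact (WittVector.irreducible p).not_isUnit
      (IsUnit.of_mul_eq_one c (by linear_combination h'))

omit [Finite k] in
lemma witt_p_zero_S : (p : W ⧸ Ideal.span {(p : W)}) = 0 := by
  have h : ((p : W ⧸ Ideal.span {(p : W)})) = Ideal.Quotient.mk _ (p : W) := by push_cast; rfl
  rw [h, Ideal.Quotient.eq_zero_iff_mem]
  exact Ideal.mem_span_singleton_self _

end WittLemmas
/-- The reduction homomorphism `SL₂(W(k)/p²W(k)) → SL₂(W(k)/pW(k))` induced entrywise by the
natural surjection `W(k)/p²W(k) → W(k)/pW(k)`. -/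
noncomputable def reductionSL2 (p : ℕ) [Fact p.Prime] (k : Type*) [CommRing k] :
    Matrix.SpecialLinearGroup (Fin 2)
        (WittVector p k ⧸ Ideal.span {(p : WittVector p k) ^ 2}) →*
      Matrix.SpecialLinearGroup (Fin 2)
        (WittVector p k ⧸ Ideal.span {(p : WittVector p k)}) :=
  Matrix.SpecialLinearGroup.map
    (Ideal.Quotient.factor (S := Ideal.span {(p : WittVector p k) ^ 2})
      (T := Ideal.span {(p : WittVector p k)})
      (Ideal.span_singleton_le_span_singleton.mpr (dvd_pow_self _ two_ne_zero)))

set_option maxHeartbeats 1000000 in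
set_option synthInstance.maxHeartbeats 500000 in
/-- For `p ≥ 5` prime and `k` a finite field of characteristic `p`, the reduction map
`SL₂(W(k)/p²) → SL₂(W(k)/p)` is surjective but admits no group-theoretic section. -/
theorem reductionSL2_surjective_and_not_splits
    (p : ℕ) [Fact p.Prime] (hp5 : 5 ≤ p)
    (k : Type*) [Field k] [Finite k] [CharP k p] :
    Function.Surjective (reductionSL2 p k) ∧
      ¬ ∃ s : Matrix.SpecialLinearGroup (Fin 2)
            (WittVector p k ⧸ Ideal.span {(p : WittVector p k)}) →*
          Matrix.SpecialLinearGroup (Fin 2)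
            (WittVector p k ⧸ Ideal.span {(p : WittVector p k) ^ 2}),
        (reductionSL2 p k).comp s = MonoidHom.id _ := by
  have hp : p.Prime := Fact.out
  set W := WittVector p k
  set R := W ⧸ Ideal.span {(p : W) ^ 2} with hR
  set S := W ⧸ Ideal.span {(p : W)} with hS
  constructor
  · -- surjectivity
    intro g
    obtain ⟨a, ha⟩ := wittPi_surj p k ((g : Matrix (Fin 2) (Fin 2) S) 0 0)
    obtain ⟨b, hb⟩ := wittPi_surj p k ((g : Matrix (Fin 2) (Fin 2) S) 0 1)
    obtain ⟨c, hc⟩ := wittPi_surj p k ((g : Matrix (Fin 2) (Fin 2) S) 1 0)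
    obtain ⟨d, hd⟩ := wittPi_surj p k ((g : Matrix (Fin 2) (Fin 2) S) 1 1)
    obtain ⟨κ, hκD⟩ : ∃ κ, a * d - b * c = 1 + κ := ⟨a * d - b * c - 1, by ring⟩
    have hdetg : (g : Matrix (Fin 2) (Fin 2) S).det = 1 := g.2
    rw [Matrix.det_fin_two] at hdetg
    have hπκ : wittPi p k κ = 0 := by
      have h1 := congrArg (wittPi p k) hκD
      rw [map_sub, map_mul, map_mul, map_add, map_one, ha, hb, hc, hd, hdetg] at h1
      linear_combination -h1
    have hκ2 : κ * κ = 0 := witt_ker_mul p k κ κ hπκ hπκ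
    refine ⟨⟨!![a * (1 - κ), b * (1 - κ); c, d], ?_⟩, ?_⟩
    · rw [Matrix.det_fin_two_of]
      linear_combination (1 - κ) * hκD - hκ2
    · apply Matrix.SpecialLinearGroup.ext
      intro i j
      change (wittPi p k) ((!![a * (1 - κ), b * (1 - κ); c, d]) i j) = _
      fin_cases i <;> fin_cases j <;>
        simp [reductionSL2, Matrix.SpecialLinearGroup.map_apply_coe, RingHom.mapMatrix_apply,
          Matrix.map_apply, map_mul, map_sub, map_one, hπκ, ha, hb, hc, hd]
  · -- non-splitting
    rintro ⟨s, hs⟩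
    set e : Matrix (Fin 2) (Fin 2) S := !![0,1;0,0] with he
    have hee : e * e = 0 := by
      ext i j
      fin_cases i <;> fin_cases j <;> simp [he, Matrix.mul_apply, Fin.sum_univ_two]
    have hudet : (!![1,1;0,1] : Matrix (Fin 2) (Fin 2) S).det = 1 := by
      rw [Matrix.det_fin_two_of]; ring
    set u : Matrix.SpecialLinearGroup (Fin 2) S := ⟨!![1,1;0,1], hudet⟩ with hu
    have hu1 : (u : Matrix (Fin 2) (Fin 2) S) = 1 + e := by
      ext i j
      fin_cases i <;> fin_cases j <;> simp [hu, he, Matrix.one_apply]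
    have hup : u ^ p = 1 := by
      apply Subtype.ext
      rw [Matrix.SpecialLinearGroup.coe_pow, Matrix.SpecialLinearGroup.coe_one, hu1,
        unip_pow e hee p, ← Nat.cast_smul_eq_nsmul S, witt_p_zero_S, zero_smul, add_zero]
    have hresu : reductionSL2 p k (s u) = u := by
      rw [← MonoidHom.comp_apply, hs, MonoidHom.id_apply]
    have hcoe : (wittPi p k).mapMatrix ((s u : Matrix (Fin 2) (Fin 2) R)) =
        (u : Matrix (Fin 2) (Fin 2) S) := by
      have h2 := congrArg Subtype.val hresu
      rw [reductionSL2, Matrix.SpecialLinearGroup.map_apply_coe] at h2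
      exact h2
    have hentry : ∀ i j, wittPi p k ((s u : Matrix (Fin 2) (Fin 2) R) i j) =
        (!![1,1;0,1] : Matrix (Fin 2) (Fin 2) S) i j := by
      intro i j
      have h3 := Matrix.ext_iff.mpr hcoe i j
      rw [RingHom.mapMatrix_apply, Matrix.map_apply] at h3
      exact h3
    set B : Matrix (Fin 2) (Fin 2) R := (s u : Matrix (Fin 2) (Fin 2) R) with hB
    have hπδ : wittPi p k (B.trace - 2) = 0 := by
      have h00 := hentry 0 0
      have h11 := hentry 1 1
      norm_num at h00 h11
      rw [Matrix.trace_fin_two, map_sub, map_add, h00, h11, map_ofNat]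
      norm_num
    have hpowB := pow_p_eq B (s u).2 p hp hp5
      (witt_ker_mul p k _ _ (wittPi_p p k) hπδ) (witt_ker_mul p k _ _ hπδ hπδ)
    have hsup : (s u) ^ p = 1 := by rw [← map_pow, hup, map_one]
    have hBp : B ^ p = 1 := by
      rw [hB, ← Matrix.SpecialLinearGroup.coe_pow, hsup, Matrix.SpecialLinearGroup.coe_one]
    rw [hBp] at hpowB
    have hsm : (p • (B - 1) : Matrix (Fin 2) (Fin 2) R) = 0 := left_eq_add.mp hpowB
    have h01 : (p : R) * (B 0 1) = 0 := by
      have h4 := Matrix.ext_iff.mpr hsm 0 1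
      rw [Matrix.smul_apply, Matrix.sub_apply, Matrix.zero_apply, Matrix.one_apply_ne
        (by decide), sub_zero, ← Nat.cast_smul_eq_nsmul R, smul_eq_mul] at h4
      exact h4
    have hπ01 : wittPi p k (B 0 1) = 1 := by
      have h5 := hentry 0 1
      simpa using h5
    have h02 : (p : R) * (B 0 1 - 1) = 0 :=
      witt_ker_mul p k _ _ (wittPi_p p k) (by rw [map_sub, hπ01, map_one, sub_self])
    have hpzero : (p : R) = 0 := by linear_combination h01 - h02
    exact witt_p_ne_zero p k hpzero
end
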